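/- Let w be a smooth solution of the 1-D wave equation w_{tt} = w_{xx} on (ℓ,L)×(T₀,T₁) with w(ℓ,t) = w(L,t) = 0 for T₀ < t < T₁. Then ∫_{T₀}^{T₁} |w_x(ℓ,t)|² dt ≤ ((T₁-T₀+2(L-ℓ))/(L-ℓ)) · ∫_ℓ^L (|w_t(x,T₀)|² + |w_x(x,T₀)|²) dx. -/

import Mathlib

open Real

open MeasureTheory Set Metric intervalIntegral

namespace Stmt10Aux

lemma paramDeriv (a b t : ℝ) (g gt : ℝ × ℝ → ℝ)
    (hg : Continuous g)
    (hgt : ∀ p : ℝ × ℝ, HasDerivAt (fun s => g (p.1, s)) (gt p) p.2)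
    (hgtc : Continuous gt) :
    HasDerivAt (fun s => ∫ x in a..b, g (x, s)) (∫ x in a..b, gt (x, t)) t := by
  obtain ⟨M, hM⟩ := ((isCompact_uIcc (a := a) (b := b)).prod
    (isCompact_Icc (a := t - 1) (b := t + 1))).exists_bound_of_continuousOn hgtc.continuousOn
  have key := intervalIntegral.hasDerivAt_integral_of_dominated_loc_of_deriv_le
    (F := fun s x => g (x, s)) (F' := fun s x => gt (x, s)) (x₀ := t)
    (bound := fun _ => M) (a := a) (b := b) (μ := volume) (s := ball t 1) (ball_mem_nhds t one_pos)
    (Filter.Eventually.of_forall fun s =>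
      (hg.comp (continuous_id.prodMk continuous_const)).aestronglyMeasurable)
    ((hg.comp (continuous_id.prodMk continuous_const)).intervalIntegrable a b)
    (hgtc.comp (continuous_id.prodMk continuous_const)).aestronglyMeasurable
    (Filter.Eventually.of_forall fun x hx s hs => hM (x, s)
      ⟨uIoc_subset_uIcc hx, by
        have : s ∈ Ioo (t - 1) (t + 1) := by rwa [Real.ball_eq_Ioo] at hs
        exact Ioo_subset_Icc_self this⟩)
    (by exact (continuous_const (y := M)).intervalIntegrable a b)
    (Filter.Eventually.of_forall fun x hx s hs => hgt (x, s))
  exact key.2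

section setup
variable (w : ℝ → ℝ → ℝ)

noncomputable def Wfun : ℝ × ℝ → ℝ := Function.uncurry w
noncomputable def etv : ℝ × ℝ := (0, 1)
noncomputable def exv : ℝ × ℝ := (1, 0)
noncomputable def Ufun : ℝ × ℝ → ℝ := fun p => fderiv ℝ (Wfun w) p (etv)
noncomputable def Vfun : ℝ × ℝ → ℝ := fun p => fderiv ℝ (Wfun w) p (exv)
noncomputable def f2 : ℝ × ℝ → (ℝ × ℝ) →L[ℝ] (ℝ × ℝ) →L[ℝ] ℝ :=
  fun p => fderiv ℝ (fderiv ℝ (Wfun w)) p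

variable (hreg : ContDiff ℝ 2 (Function.uncurry w))

include hreg

lemma hWd : Differentiable ℝ (Wfun w) := hreg.differentiable (by norm_num)

lemma hW1 : ContDiff ℝ 1 (fderiv ℝ (Wfun w)) := hreg.fderiv_right (by norm_num)

lemma hf2 : ∀ p, HasFDerivAt (fderiv ℝ (Wfun w)) (f2 w p) p := fun p =>
  (((hW1 w hreg).differentiable one_ne_zero) p).hasFDerivAt

lemma hAt : ∀ x t : ℝ, HasDerivAt (fun τ => w x τ) (Ufun w (x, t)) t := fun x t =>
  (hWd w hreg (x, t)).hasFDerivAt.comp_hasDerivAt t ((hasDerivAt_const t x).prodMk (hasDerivAt_id t))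

lemma hBx : ∀ x t : ℝ, HasDerivAt (fun y => w y t) (Vfun w (x, t)) x := fun x t =>
  by have h := (hWd w hreg (x, t)).hasFDerivAt.comp_hasDerivAt x ((hasDerivAt_id x).prodMk (hasDerivAt_const x t)); exact h

lemma hderivT : ∀ x t : ℝ, deriv (fun τ => w x τ) t = Ufun w (x, t) := fun x t =>
  (hAt w hreg x t).deriv

lemma hderivX : ∀ x t : ℝ, deriv (fun y => w y t) x = Vfun w (x, t) := fun x t =>
  (hBx w hreg x t).deriv

lemma hUVt : ∀ (e : ℝ × ℝ) (x t : ℝ),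
    HasDerivAt (fun τ => fderiv ℝ (Wfun w) (x, τ) e) (f2 w (x, t) (etv) e) t := by
  intro e x t
  have h1 : HasFDerivAt (fun q => fderiv ℝ (Wfun w) q e)
      ((ContinuousLinearMap.apply ℝ ℝ e).comp (f2 w (x, t))) (x, t) :=
    (ContinuousLinearMap.apply ℝ ℝ e).hasFDerivAt.comp (x, t) (hf2 w hreg (x, t))
  have h2 := h1.comp_hasDerivAt t ((hasDerivAt_const t x).prodMk (hasDerivAt_id t))
  exact h2

lemma hUVx : ∀ (e : ℝ × ℝ) (x t : ℝ),
    HasDerivAt (fun y => fderiv ℝ (Wfun w) (y, t) e) (f2 w (x, t) (exv) e) x := by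
  intro e x t
  have h1 : HasFDerivAt (fun q => fderiv ℝ (Wfun w) q e)
      ((ContinuousLinearMap.apply ℝ ℝ e).comp (f2 w (x, t))) (x, t) :=
    (ContinuousLinearMap.apply ℝ ℝ e).hasFDerivAt.comp (x, t) (hf2 w hreg (x, t))
  have h2 := h1.comp_hasDerivAt x ((hasDerivAt_id x).prodMk (hasDerivAt_const x t))
  exact h2

lemma hsymm : ∀ (p a b : ℝ × ℝ), f2 w p a b = f2 w p b a := fun p a b =>
  second_derivative_symmetric (fun y => (hWd w hreg y).hasFDerivAt) (hf2 w hreg p) a b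

lemma hUc : Continuous (Ufun w) :=
  (ContinuousLinearMap.apply ℝ ℝ (etv)).continuous.comp (hW1 w hreg).continuous

lemma hVc : Continuous (Vfun w) :=
  (ContinuousLinearMap.apply ℝ ℝ (exv)).continuous.comp (hW1 w hreg).continuous

lemma hf2c (a b : ℝ × ℝ) : Continuous fun p => f2 w p a b :=
  (ContinuousLinearMap.apply ℝ ℝ b).continuous.comp
    ((ContinuousLinearMap.apply ℝ ((ℝ × ℝ) →L[ℝ] ℝ) a).continuous.comp
      ((hW1 w hreg).continuous_fderiv one_ne_zero))

end setup

section core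
variable (w : ℝ → ℝ → ℝ) (ℓ L T₀ T₁ : ℝ)

noncomputable def Efun : ℝ → ℝ := fun t =>
  ∫ x in ℓ..L, (Ufun w (x, t) * Ufun w (x, t) + Vfun w (x, t) * Vfun w (x, t))

noncomputable def Hfun : ℝ → ℝ := fun t =>
  ∫ x in ℓ..L, (f2 w (x, t) (etv) (etv) * Ufun w (x, t) + Ufun w (x, t) * f2 w (x, t) (etv) (etv)
    + (f2 w (x, t) (etv) (exv) * Vfun w (x, t) + Vfun w (x, t) * f2 w (x, t) (etv) (exv)))

noncomputable def Ffun : ℝ → ℝ := fun t =>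
  ∫ x in ℓ..L, (x - L) * (Ufun w (x, t) * Vfun w (x, t))

noncomputable def Gfun : ℝ → ℝ := fun t =>
  ∫ x in ℓ..L, (x - L) * (f2 w (x, t) (etv) (etv) * Vfun w (x, t)
    + Ufun w (x, t) * f2 w (x, t) (etv) (exv))

variable (hreg : ContDiff ℝ 2 (Function.uncurry w))
include hreg

lemma hEf' : ∀ t, HasDerivAt (Efun w ℓ L) (Hfun w ℓ L t) t := by
  intro t
  unfold Efun Hfun
  refine paramDeriv ℓ L t
    (fun p => Ufun w p * Ufun w p + Vfun w p * Vfun w p)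
    (fun p => f2 w p (etv) (etv) * Ufun w p + Ufun w p * f2 w p (etv) (etv)
      + (f2 w p (etv) (exv) * Vfun w p + Vfun w p * f2 w p (etv) (exv))) ?_ ?_ ?_
  · exact ((hUc w hreg).mul (hUc w hreg)).add ((hVc w hreg).mul (hVc w hreg))
  · intro p
    exact ((hUVt w hreg etv p.1 p.2).mul (hUVt w hreg etv p.1 p.2)).add
      ((hUVt w hreg exv p.1 p.2).mul (hUVt w hreg exv p.1 p.2))
  · exact (((hf2c w hreg etv etv).mul (hUc w hreg)).add
      ((hUc w hreg).mul (hf2c w hreg etv etv))).add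
      (((hf2c w hreg etv exv).mul (hVc w hreg)).add
        ((hVc w hreg).mul (hf2c w hreg etv exv)))

lemma hFf' : ∀ t, HasDerivAt (Ffun w ℓ L) (Gfun w ℓ L t) t := by
  intro t
  unfold Ffun Gfun
  refine paramDeriv ℓ L t
    (fun p => (p.1 - L) * (Ufun w p * Vfun w p))
    (fun p => (p.1 - L) * (f2 w p (etv) (etv) * Vfun w p + Ufun w p * f2 w p (etv) (exv))) ?_ ?_ ?_
  · exact (continuous_fst.sub continuous_const).mul ((hUc w hreg).mul (hVc w hreg))
  · intro p
    exact HasDerivAt.const_mul (p.1 - L)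
      ((hUVt w hreg etv p.1 p.2).mul (hUVt w hreg exv p.1 p.2))
  · exact (continuous_fst.sub continuous_const).mul
      (((hf2c w hreg etv etv).mul (hVc w hreg)).add
        ((hUc w hreg).mul (hf2c w hreg etv exv)))

lemma hHc : Continuous (Hfun w ℓ L) := by
  apply intervalIntegral.continuous_parametric_intervalIntegral_of_continuous'
    (f := fun t x => f2 w (x, t) (etv) (etv) * Ufun w (x, t) + Ufun w (x, t) * f2 w (x, t) (etv) (etv)
      + (f2 w (x, t) (etv) (exv) * Vfun w (x, t) + Vfun w (x, t) * f2 w (x, t) (etv) (exv)))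
  have hsw : Continuous (fun q : ℝ × ℝ => (q.2, q.1)) := continuous_swap
  exact (((((hf2c w hreg etv etv).mul (hUc w hreg)).add
      ((hUc w hreg).mul (hf2c w hreg etv etv))).add
      (((hf2c w hreg etv exv).mul (hVc w hreg)).add
        ((hVc w hreg).mul (hf2c w hreg etv exv)))).comp hsw)

lemma hGc : Continuous (Gfun w ℓ L) := by
  apply intervalIntegral.continuous_parametric_intervalIntegral_of_continuous'
    (f := fun t x => (x - L) * (f2 w (x, t) (etv) (etv) * Vfun w (x, t)
      + Ufun w (x, t) * f2 w (x, t) (etv) (exv)))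
  have hsw : Continuous (fun q : ℝ × ℝ => (q.2, q.1)) := continuous_swap
  exact ((continuous_fst.sub continuous_const).mul
      (((hf2c w hreg etv etv).mul (hVc w hreg)).add
        ((hUc w hreg).mul (hf2c w hreg etv exv)))).comp hsw

end core

section core2
variable (w : ℝ → ℝ → ℝ) (ℓ L T₀ T₁ : ℝ)
variable (hreg : ContDiff ℝ 2 (Function.uncurry w))
variable (hℓL : ℓ < L) (hT : T₀ < T₁)
variable (heq : ∀ x t : ℝ, ℓ < x → x < L → T₀ < t → t < T₁ →
      deriv (fun τ => deriv (fun τ' => w x τ') τ) t =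
      deriv (fun y => deriv (fun y' => w y' t) y) x)
variable (hbc : ∀ t : ℝ, T₀ < t → t < T₁ → w ℓ t = 0 ∧ w L t = 0)

include hreg heq in
lemma hPDE : ∀ x t : ℝ, ℓ < x → x < L → T₀ < t → t < T₁ →
    f2 w (x, t) etv etv = f2 w (x, t) exv exv := by
  intro x t h1 h2 h3 h4
  have h := heq x t h1 h2 h3 h4
  have e1 : (fun τ => deriv (fun τ' => w x τ') τ) = fun τ => fderiv ℝ (Wfun w) (x, τ) etv :=
    funext fun τ => hderivT w hreg x τ
  have e2 : (fun y => deriv (fun y' => w y' t) y) = fun y => fderiv ℝ (Wfun w) (y, t) exv :=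
    funext fun y => hderivX w hreg y t
  rw [e1, (hUVt w hreg etv x t).deriv, e2, (hUVx w hreg exv x t).deriv] at h
  exact h

include hreg hbc in
lemma hbcU : ∀ t : ℝ, T₀ < t → t < T₁ → Ufun w (ℓ, t) = 0 ∧ Ufun w (L, t) = 0 := by
  intro t h1 h2
  constructor
  · have hev : (fun τ => w ℓ τ) =ᶠ[nhds t] fun _ => (0 : ℝ) := by
      filter_upwards [Ioo_mem_nhds h1 h2] with τ hτ
      exact (hbc τ hτ.1 hτ.2).1
    rw [← hderivT w hreg ℓ t, hev.deriv_eq, deriv_const]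
  · have hev : (fun τ => w L τ) =ᶠ[nhds t] fun _ => (0 : ℝ) := by
      filter_upwards [Ioo_mem_nhds h1 h2] with τ hτ
      exact (hbc τ hτ.1 hτ.2).2
    rw [← hderivT w hreg L t, hev.deriv_eq, deriv_const]

include hreg hℓL heq hbc in
lemma hHf0 : ∀ t ∈ Ioo T₀ T₁, Hfun w ℓ L t = 0 := by
  intro t ht
  have hc : ∀ g : ℝ × ℝ → ℝ, Continuous g → Continuous fun x : ℝ => g (x, t) :=
    fun g hg => hg.comp (continuous_id.prodMk continuous_const)
  set D : ℝ → ℝ := fun x => Vfun w (x, t) * Ufun w (x, t) + Ufun w (x, t) * Vfun w (x, t) with hD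
  set D' : ℝ → ℝ := fun x =>
    (f2 w (x, t) exv exv * Ufun w (x, t) + Vfun w (x, t) * f2 w (x, t) exv etv)
      + (f2 w (x, t) exv etv * Vfun w (x, t) + Ufun w (x, t) * f2 w (x, t) exv exv) with hD'
  have hDd : ∀ x, HasDerivAt D (D' x) x := fun x =>
    ((hUVx w hreg exv x t).mul (hUVx w hreg etv x t)).add
      ((hUVx w hreg etv x t).mul (hUVx w hreg exv x t))
  have hD'c : Continuous D' :=
    (((hc _ (hf2c w hreg exv exv)).mul (hc _ (hUc w hreg))).add
      ((hc _ (hVc w hreg)).mul (hc _ (hf2c w hreg exv etv)))).add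
      (((hc _ (hf2c w hreg exv etv)).mul (hc _ (hVc w hreg))).add
        ((hc _ (hUc w hreg)).mul (hc _ (hf2c w hreg exv exv))))
  have hftc : ∫ x in ℓ..L, D' x = D L - D ℓ :=
    intervalIntegral.integral_eq_sub_of_hasDerivAt (fun x _ => hDd x)
      (hD'c.intervalIntegrable ℓ L)
  have hcongr : Hfun w ℓ L t = ∫ x in ℓ..L, D' x := by
    apply intervalIntegral.integral_congr_ae
    have hL : ∀ᵐ x : ℝ, x ∉ ({L} : Set ℝ) := (Set.countable_singleton L).ae_notMem volume
    filter_upwards [hL] with x hxL hx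
    rw [Set.uIoc_of_le hℓL.le] at hx
    have hxx : x ∈ Ioo ℓ L := ⟨hx.1, lt_of_le_of_ne hx.2 (by simpa using hxL)⟩
    have e1 := hPDE w ℓ L T₀ T₁ hreg heq x t hxx.1 hxx.2 ht.1 ht.2
    have e2 := hsymm w hreg (x, t) etv exv
    simp only [hD']
    rw [e1, e2]; ring
  rw [hcongr, hftc]
  have h1 := (hbcU w ℓ L T₀ T₁ hreg hbc t ht.1 ht.2).1
  have h2 := (hbcU w ℓ L T₀ T₁ hreg hbc t ht.1 ht.2).2
  simp only [hD, h1, h2]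
  ring

include hreg hℓL heq hbc in
lemma hEconst : ∀ t ∈ Icc T₀ T₁, Efun w ℓ L t = Efun w ℓ L T₀ := by
  intro t ht
  have hftc : ∫ s in T₀..t, Hfun w ℓ L s = Efun w ℓ L t - Efun w ℓ L T₀ :=
    intervalIntegral.integral_eq_sub_of_hasDerivAt (fun s _ => hEf' w ℓ L hreg s)
      ((hHc w ℓ L hreg).intervalIntegrable _ _)
  have hzero : ∫ s in T₀..t, Hfun w ℓ L s = ∫ s in T₀..t, (0 : ℝ) := by
    apply intervalIntegral.integral_congr_ae
    have hL : ∀ᵐ s : ℝ, s ∉ ({t} : Set ℝ) := (Set.countable_singleton t).ae_notMem volume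
    filter_upwards [hL] with s hsT hs
    rw [Set.uIoc_of_le ht.1] at hs
    have hst : s < t := lt_of_le_of_ne hs.2 (by simpa using hsT)
    exact hHf0 w ℓ L T₀ T₁ hreg hℓL heq hbc s ⟨hs.1, lt_of_lt_of_le hst ht.2⟩
  rw [hzero] at hftc
  simp only [intervalIntegral.integral_zero] at hftc
  linarith

include hreg hℓL heq hbc in
lemma hGfval : ∀ t ∈ Ioo T₀ T₁, Gfun w ℓ L t
    = (L - ℓ) / 2 * (Vfun w (ℓ, t) * Vfun w (ℓ, t)) - Efun w ℓ L T₀ / 2 := by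
  intro t ht
  have hc : ∀ g : ℝ × ℝ → ℝ, Continuous g → Continuous fun x : ℝ => g (x, t) :=
    fun g hg => hg.comp (continuous_id.prodMk continuous_const)
  set Q : ℝ → ℝ := fun x => Ufun w (x, t) * Ufun w (x, t) + Vfun w (x, t) * Vfun w (x, t) with hQ
  set Q' : ℝ → ℝ := fun x =>
    (f2 w (x, t) exv etv * Ufun w (x, t) + Ufun w (x, t) * f2 w (x, t) exv etv)
      + (f2 w (x, t) exv exv * Vfun w (x, t) + Vfun w (x, t) * f2 w (x, t) exv exv) with hQ'
  have hQd : ∀ x, HasDerivAt Q (Q' x) x := fun x =>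
    ((hUVx w hreg etv x t).mul (hUVx w hreg etv x t)).add
      ((hUVx w hreg exv x t).mul (hUVx w hreg exv x t))
  set P : ℝ → ℝ := fun x => (x - L) * Q x / 2 with hP
  set P' : ℝ → ℝ := fun x => (1 * Q x + (x - L) * Q' x) / 2 with hP'
  have hPd : ∀ x, HasDerivAt P (P' x) x := fun x =>
    (((hasDerivAt_id x).sub_const L).mul (hQd x)).div_const 2
  have hQc : Continuous Q :=
    ((hc _ (hUc w hreg)).mul (hc _ (hUc w hreg))).add
      ((hc _ (hVc w hreg)).mul (hc _ (hVc w hreg)))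
  have hQ'c : Continuous Q' :=
    (((hc _ (hf2c w hreg exv etv)).mul (hc _ (hUc w hreg))).add
      ((hc _ (hUc w hreg)).mul (hc _ (hf2c w hreg exv etv)))).add
      (((hc _ (hf2c w hreg exv exv)).mul (hc _ (hVc w hreg))).add
        ((hc _ (hVc w hreg)).mul (hc _ (hf2c w hreg exv exv))))
  have hP'c : Continuous P' :=
    (((continuous_const.mul hQc).add
      ((continuous_id.sub continuous_const).mul hQ'c)).div_const 2)
  have hftc : ∫ x in ℓ..L, P' x = P L - P ℓ :=
    intervalIntegral.integral_eq_sub_of_hasDerivAt (fun x _ => hPd x)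
      (hP'c.intervalIntegrable ℓ L)
  have h1 : Gfun w ℓ L t = ∫ x in ℓ..L, (P' x - Q x / 2) := by
    apply intervalIntegral.integral_congr_ae
    have hL : ∀ᵐ x : ℝ, x ∉ ({L} : Set ℝ) := (Set.countable_singleton L).ae_notMem volume
    filter_upwards [hL] with x hxL hx
    rw [Set.uIoc_of_le hℓL.le] at hx
    have hxx : x ∈ Ioo ℓ L := ⟨hx.1, lt_of_le_of_ne hx.2 (by simpa using hxL)⟩
    have e1 := hPDE w ℓ L T₀ T₁ hreg heq x t hxx.1 hxx.2 ht.1 ht.2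
    have e2 := hsymm w hreg (x, t) etv exv
    simp only [hP', hQ', hQ]
    rw [e1, e2]; ring
  have h2 : ∫ x in ℓ..L, (P' x - Q x / 2)
      = (∫ x in ℓ..L, P' x) - ∫ x in ℓ..L, Q x / 2 :=
    intervalIntegral.integral_sub (hP'c.intervalIntegrable ℓ L)
      ((hQc.div_const 2).intervalIntegrable ℓ L)
  have h3 : ∫ x in ℓ..L, Q x / 2 = (∫ x in ℓ..L, Q x) / 2 :=
    intervalIntegral.integral_div 2 Q
  have h4 : (∫ x in ℓ..L, Q x) = Efun w ℓ L t := rfl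
  have h5 := hEconst w ℓ L T₀ T₁ hreg hℓL heq hbc t (Ioo_subset_Icc_self ht)
  have h6 := (hbcU w ℓ L T₀ T₁ hreg hbc t ht.1 ht.2).1
  rw [h1, h2, hftc, h3, h4, h5]
  simp only [hP, hQ, h6]
  ring

include hℓL hreg in
lemma hFbound : ∀ t : ℝ, |Ffun w ℓ L t| ≤ (L - ℓ) / 2 * Efun w ℓ L t := by
  intro t
  have hc : ∀ g : ℝ × ℝ → ℝ, Continuous g → Continuous fun x : ℝ => g (x, t) :=
    fun g hg => hg.comp (continuous_id.prodMk continuous_const)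
  have habs : |Ffun w ℓ L t| ≤ ∫ x in ℓ..L, |(x - L) * (Ufun w (x, t) * Vfun w (x, t))| :=
    intervalIntegral.abs_integral_le_integral_abs hℓL.le
  have hmono : (∫ x in ℓ..L, |(x - L) * (Ufun w (x, t) * Vfun w (x, t))|)
      ≤ ∫ x in ℓ..L, (L - ℓ) / 2 * (Ufun w (x, t) * Ufun w (x, t)
        + Vfun w (x, t) * Vfun w (x, t)) := by
    apply intervalIntegral.integral_mono_on hℓL.le
    · exact (((continuous_id.sub continuous_const).mul
        ((hc _ (hUc w hreg)).mul (hc _ (hVc w hreg)))).abs).intervalIntegrable ℓ L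
    · exact (continuous_const.mul (((hc _ (hUc w hreg)).mul (hc _ (hUc w hreg))).add
        ((hc _ (hVc w hreg)).mul (hc _ (hVc w hreg))))).intervalIntegrable ℓ L
    · intro x hx
      set a := Ufun w (x, t)
      set b := Vfun w (x, t)
      have h1 : |x - L| ≤ L - ℓ := by
        rw [abs_le]; constructor <;> [linarith [hx.1]; linarith [hx.2]]
      have h2 : 2 * |a * b| ≤ a * a + b * b := by
        rw [abs_mul]
        nlinarith [sq_nonneg (|a| - |b|), sq_abs a, sq_abs b, abs_nonneg a, abs_nonneg b]
      have h3 : 0 ≤ a * a + b * b := by nlinarith [sq_nonneg a, sq_nonneg b]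
      calc |(x - L) * (a * b)| = |x - L| * |a * b| := abs_mul _ _
        _ ≤ (L - ℓ) * ((a * a + b * b) / 2) := by
            apply mul_le_mul h1 (by linarith) (abs_nonneg _) (by linarith)
        _ = (L - ℓ) / 2 * (a * a + b * b) := by ring
  have hcm : ∫ x in ℓ..L, (L - ℓ) / 2 * (Ufun w (x, t) * Ufun w (x, t)
      + Vfun w (x, t) * Vfun w (x, t)) = (L - ℓ) / 2 * Efun w ℓ L t :=
    intervalIntegral.integral_const_mul _ _
  calc |Ffun w ℓ L t| ≤ _ := habs
    _ ≤ _ := hmono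
    _ = _ := hcm

include hℓL in
lemma hEnn : 0 ≤ Efun w ℓ L T₀ := by
  apply intervalIntegral.integral_nonneg hℓL.le
  intro x _
  nlinarith [mul_self_nonneg (Ufun w (x, T₀)), mul_self_nonneg (Vfun w (x, T₀))]

end core2


end Stmt10Aux

open Stmt10Aux in
/-- Direct (hidden regularity) inequality for the 1-D wave equation (Lemma 3.1):
if `w` solves `w_{tt} = w_{xx}` on `(ℓ,L) × (T₀,T₁)` with `w(ℓ,·) = w(L,·) = 0`, then
the boundary flux at `x = ℓ` is controlled by the energy at time `T₀`. -/
theorem stmt_10 (ℓ L T₀ T₁ : ℝ) (hℓL : ℓ < L) (hT : T₀ < T₁)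
    (w : ℝ → ℝ → ℝ) (hreg : ContDiff ℝ 2 (Function.uncurry w))
    (heq : ∀ x t : ℝ, ℓ < x → x < L → T₀ < t → t < T₁ →
      deriv (fun τ => deriv (fun τ' => w x τ') τ) t =
      deriv (fun y => deriv (fun y' => w y' t) y) x)
    (hbc : ∀ t : ℝ, T₀ < t → t < T₁ → w ℓ t = 0 ∧ w L t = 0) :
    (∫ t in T₀..T₁, (deriv (fun y => w y t) ℓ) ^ 2) ≤
      (T₁ - T₀ + 2 * (L - ℓ)) / (L - ℓ) *
        ∫ x in ℓ..L,
          ((deriv (fun τ => w x τ) T₀) ^ 2 + (deriv (fun y => w y T₀) x) ^ 2) := by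
  have hd : 0 < L - ℓ := sub_pos.2 hℓL
  have E1 : (∫ t in T₀..T₁, (deriv (fun y => w y t) ℓ) ^ 2)
      = ∫ t in T₀..T₁, Vfun w (ℓ, t) * Vfun w (ℓ, t) :=
    intervalIntegral.integral_congr fun t _ => by rw [hderivX w hreg ℓ t]; ring
  have E2 : (∫ x in ℓ..L, ((deriv (fun τ => w x τ) T₀) ^ 2 + (deriv (fun y => w y T₀) x) ^ 2))
      = Efun w ℓ L T₀ :=
    intervalIntegral.integral_congr fun x _ => by
      rw [hderivT w hreg x T₀, hderivX w hreg x T₀]; ring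
  rw [E1, E2]
  have hfluxc : Continuous fun t : ℝ => Vfun w (ℓ, t) * Vfun w (ℓ, t) := by
    have h1 : Continuous fun t : ℝ => Vfun w (ℓ, t) :=
      (hVc w hreg).comp (continuous_const.prodMk continuous_id)
    exact h1.mul h1
  have hftcF : ∫ t in T₀..T₁, Gfun w ℓ L t = Ffun w ℓ L T₁ - Ffun w ℓ L T₀ :=
    intervalIntegral.integral_eq_sub_of_hasDerivAt (fun s _ => hFf' w ℓ L hreg s)
      ((hGc w ℓ L hreg).intervalIntegrable _ _)
  have hGcongr : ∫ t in T₀..T₁, Gfun w ℓ L t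
      = ∫ t in T₀..T₁, ((L - ℓ) / 2 * (Vfun w (ℓ, t) * Vfun w (ℓ, t)) - Efun w ℓ L T₀ / 2) := by
    apply intervalIntegral.integral_congr_ae
    have hL : ∀ᵐ s : ℝ, s ∉ ({T₁} : Set ℝ) := (Set.countable_singleton T₁).ae_notMem volume
    filter_upwards [hL] with s hsT hs
    rw [Set.uIoc_of_le hT.le] at hs
    exact hGfval w ℓ L T₀ T₁ hreg hℓL heq hbc s ⟨hs.1, lt_of_le_of_ne hs.2 (by simpa using hsT)⟩
  have hsplit : ∫ t in T₀..T₁, ((L - ℓ) / 2 * (Vfun w (ℓ, t) * Vfun w (ℓ, t)) - Efun w ℓ L T₀ / 2)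
      = (L - ℓ) / 2 * (∫ t in T₀..T₁, Vfun w (ℓ, t) * Vfun w (ℓ, t))
        - (T₁ - T₀) * (Efun w ℓ L T₀ / 2) := by
    rw [intervalIntegral.integral_sub (f := fun t => (L - ℓ) / 2 * (Vfun w (ℓ, t) * Vfun w (ℓ, t)))
      ((continuous_const.mul hfluxc).intervalIntegrable _ _)
      (intervalIntegrable_const), intervalIntegral.integral_const_mul,
      intervalIntegral.integral_const, smul_eq_mul]
  have hb1 : Ffun w ℓ L T₁ ≤ (L - ℓ) / 2 * Efun w ℓ L T₀ := by
    have h := hFbound w ℓ L hreg hℓL T₁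
    rw [hEconst w ℓ L T₀ T₁ hreg hℓL heq hbc T₁ ⟨hT.le, le_rfl⟩] at h
    exact (abs_le.1 h).2
  have hb2 : -((L - ℓ) / 2 * Efun w ℓ L T₀) ≤ Ffun w ℓ L T₀ :=
    (abs_le.1 (hFbound w ℓ L hreg hℓL T₀)).1
  have hE0 := hEnn w ℓ L T₀ hℓL
  have hkey : (L - ℓ) / 2 * (∫ t in T₀..T₁, Vfun w (ℓ, t) * Vfun w (ℓ, t))
      - (T₁ - T₀) * (Efun w ℓ L T₀ / 2) ≤ (L - ℓ) * Efun w ℓ L T₀ := by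
    rw [← hsplit, ← hGcongr, hftcF]; linarith
  rw [div_mul_eq_mul_div, le_div_iff₀ hd]
  nlinarith [hkey]
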